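/- Let 𝒜 be a finite alphabet with |𝒜| = a, let X ∈ 𝒜^n be a string of length n, and let d, i ∈ ℕ. Then the post-edit set of X with deletion budget d and insertion budget i, namely {Y : ∃ Z, Z is a subsequence of X and of Y, |X| − |Z| ≤ d, |Y| − |Z| ≤ i}, has cardinality at most Σ_{d'=0}^{d} Σ_{i'=0}^{i} C(n, d') · C(n − d' + i', i') · a^{i'}. -/

import Mathlib

/-- The post-edit set of a string `X` with deletion budget `d` and insertion
budget `i`. -/
def PostEditSet {α : Type*} (X : List α) (d i : ℕ) : Set (List α) :=
  {Y | ∃ Z : List α, Z.Sublist X ∧ Z.Sublist Y ∧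
    X.length - Z.length ≤ d ∧ Y.length - Z.length ≤ i}

namespace PostEditAux

variable {α : Type*}

/-- Merge `Z` and `g` along a boolean mask: positions marked `true` take the
next element of `g` (an insertion), positions marked `false` take the next
element of `Z`. -/
def maskMerge : List Bool → List α → List α → List α
  | [], _, _ => []
  | true :: m, zs, g :: gs => g :: maskMerge m zs gs
  | true :: _, _, [] => []
  | false :: m, z :: zs, gs => z :: maskMerge m zs gs
  | false :: _, [], _ => []

lemma exists_mask {Z Y : List α} (h : Z.Sublist Y) :
    ∃ (m : List Bool) (g : List α), m.length = Y.length ∧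
      m.count true + Z.length = Y.length ∧ g.length + Z.length = Y.length ∧
      maskMerge m Z g = Y := by
  induction h with
  | slnil => exact ⟨[], [], rfl, rfl, rfl, rfl⟩
  | @cons l₁ l₂ a h ih =>
    obtain ⟨m, g, h1, h2, h3, h4⟩ := ih
    refine ⟨true :: m, a :: g, by simp [h1], ?_, ?_, by simp [maskMerge, h4]⟩
    · simp [List.count_cons]
      omega
    · simp
      omega
  | @cons_cons l₁ l₂ a h ih =>
    obtain ⟨m, g, h1, h2, h3, h4⟩ := ih
    refine ⟨false :: m, g, by simp [h1], ?_, ?_, by simp [maskMerge, h4]⟩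
    · simp [List.count_cons]
      omega
    · simp
      omega

lemma count_true_eq (v : List Bool) :
    v.count true = ∑ j : Fin v.length, if v.get j = true then 1 else 0 := by
  induction v with
  | nil => simp
  | cons b t ih =>
    simp only [List.length_cons]
    rw [Fin.sum_univ_succ, List.count_cons, ih]
    simp [add_comm]
    cases b <;> rfl

lemma count_true_card {L : ℕ} (v : List Bool) (hv : v.length = L) :
    (Finset.univ.filter fun j : Fin L => v.get (Fin.cast hv.symm j) = true).card
      = v.count true := by
  subst hv
  rw [Finset.card_filter, count_true_eq]
  rfl

lemma nat_card_mem_list_le {β : Type*} [DecidableEq β] (l : List β) :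
    Nat.card {x // x ∈ l} ≤ l.length := by
  have e : {x // x ∈ l} ≃ {x // x ∈ l.toFinset} :=
    Equiv.subtypeEquivRight (by simp)
  rw [Nat.card_congr e, Nat.card_eq_fintype_card, Fintype.card_coe]
  exact l.toFinset_card_le

lemma aux_card {𝒜 : Type*} [Fintype 𝒜] (X : List 𝒜) (d' i' : ℕ) (hd' : d' ≤ X.length) :
    Nat.card {Y : List 𝒜 | d' ≤ X.length ∧ ∃ Z : List 𝒜, Z.Sublist X ∧ Z.Sublist Y ∧
        Z.length = X.length - d' ∧ Y.length = X.length - d' + i'} ≤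
      X.length.choose d' * ((X.length - d' + i').choose i' * Fintype.card 𝒜 ^ i') := by
  classical
  set n := X.length with hn
  set L := n - d' + i' with hL
  set C := ({Z : List 𝒜 // Z ∈ X.sublistsLen (n - d')} ×
      ({f : Fin L → Bool // (Finset.univ.filter fun j => f j = true).card = i'} ×
        (Fin i' → 𝒜))) with hC
  haveI finC1 : Finite {Z : List 𝒜 // Z ∈ X.sublistsLen (n - d')} := by
    have e : {Z : List 𝒜 // Z ∈ X.sublistsLen (n - d')} ≃
        {Z : List 𝒜 // Z ∈ (X.sublistsLen (n - d')).toFinset} :=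
      Equiv.subtypeEquivRight (by simp)
    exact Finite.of_equiv _ e.symm
  let dec : C → List 𝒜 := fun c =>
    maskMerge ((List.finRange L).map c.2.1.1) c.1.1 (List.ofFn c.2.2)
  have hsub : {Y : List 𝒜 | d' ≤ X.length ∧ ∃ Z : List 𝒜, Z.Sublist X ∧ Z.Sublist Y ∧
      Z.length = X.length - d' ∧ Y.length = X.length - d' + i'} ⊆ dec '' Set.univ := by
    rintro Y ⟨-, Z, hZX, hZY, hZl, hYl⟩
    obtain ⟨m, g, h1, h2, h3, h4⟩ := exists_mask hZY
    have hmlen : m.length = L := by rw [h1, hYl]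
    have hcnt : m.count true = i' := by omega
    have hglen : g.length = i' := by omega
    refine ⟨⟨⟨Z, List.mem_sublistsLen.2 ⟨hZX, hZl⟩⟩,
      ⟨fun j => m.get (Fin.cast hmlen.symm j), ?_⟩,
      fun j => g.get (Fin.cast hglen.symm j)⟩, Set.mem_univ _, ?_⟩
    · rw [count_true_card m hmlen, hcnt]
    · show maskMerge ((List.finRange L).map fun j => m.get (Fin.cast hmlen.symm j)) Z
        (List.ofFn fun j => g.get (Fin.cast hglen.symm j)) = Y
      have hm : ((List.finRange L).map fun j => m.get (Fin.cast hmlen.symm j)) = m := by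
        apply List.ext_get
        · simp [hmlen]
        · intro k hk1 hk2
          simp
      have hg : (List.ofFn fun j => g.get (Fin.cast hglen.symm j)) = g := by
        apply List.ext_get
        · simp [hglen]
        · intro k hk1 hk2
          simp
      rw [hm, hg, h4]
  have step1 : Nat.card {Y : List 𝒜 | d' ≤ X.length ∧ ∃ Z : List 𝒜, Z.Sublist X ∧
      Z.Sublist Y ∧ Z.length = X.length - d' ∧ Y.length = X.length - d' + i'}
      ≤ Nat.card C := by
    calc Nat.card {Y : List 𝒜 | d' ≤ X.length ∧ ∃ Z : List 𝒜, Z.Sublist X ∧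
        Z.Sublist Y ∧ Z.length = X.length - d' ∧ Y.length = X.length - d' + i'}
        = ({Y : List 𝒜 | d' ≤ X.length ∧ ∃ Z : List 𝒜, Z.Sublist X ∧
            Z.Sublist Y ∧ Z.length = X.length - d' ∧
            Y.length = X.length - d' + i'} : Set (List 𝒜)).ncard :=
          Nat.card_coe_set_eq _
      _ ≤ (dec '' Set.univ).ncard := Set.ncard_le_ncard hsub (Set.finite_univ.image _)
      _ ≤ (Set.univ : Set C).ncard := Set.ncard_image_le Set.finite_univ
      _ = Nat.card C := Set.ncard_univ _
  refine step1.trans ?_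
  rw [hC, Nat.card_prod, Nat.card_prod]
  refine Nat.mul_le_mul ?_ (Nat.mul_le_mul ?_ ?_)
  · have h1 : Nat.card {Z : List 𝒜 // Z ∈ X.sublistsLen (n - d')} ≤
        (X.sublistsLen (n - d')).length := nat_card_mem_list_le _
    rw [List.length_sublistsLen, Nat.choose_symm hd'] at h1
    exact h1
  · have h2 := Nat.card_le_card_of_injective
      (fun f : {f : Fin L → Bool // (Finset.univ.filter fun j => f j = true).card = i'} =>
        (⟨Finset.univ.filter fun j => f.1 j = true, f.2⟩ :
          {s : Finset (Fin L) // s.card = i'}))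
      ?_
    · refine h2.trans (le_of_eq ?_)
      rw [Nat.card_eq_fintype_card, Fintype.card_finset_len, Fintype.card_fin]
    · intro f g h
      apply Subtype.ext
      funext j
      have h' := congrArg Subtype.val h
      rw [Finset.ext_iff] at h'
      have hj := h' j
      simp only [Finset.mem_filter, Finset.mem_univ, true_and] at hj
      rw [Bool.eq_iff_iff]
      exact hj
  · rw [Nat.card_fun, Nat.card_eq_fintype_card, Nat.card_eq_fintype_card, Fintype.card_fin]

end PostEditAux

/-- Counting bound underlying Theorem 4: the post-edit set of a length-`n` string
over an alphabet of size `a`, with deletion budget `d` and insertion budget `i`,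
has cardinality at most `Σ_{d'≤d} Σ_{i'≤i} C(n,d')·C(n−d'+i',i')·a^{i'}`. -/
theorem card_postEditSet_le {𝒜 : Type*} [Fintype 𝒜] {a n : ℕ}
    (hcard : Fintype.card 𝒜 = a) (X : List 𝒜) (hX : X.length = n) (d i : ℕ) :
    Nat.card (PostEditSet X d i) ≤
      ∑ d' ∈ Finset.range (d + 1), ∑ i' ∈ Finset.range (i + 1),
        n.choose d' * (n - d' + i').choose i' * a ^ i' := by
  classical
  subst hcard
  subst hX
  set n := X.length with hn
  set A : ℕ → ℕ → Set (List 𝒜) := fun d' i' =>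
    {Y : List 𝒜 | d' ≤ X.length ∧ ∃ Z : List 𝒜, Z.Sublist X ∧ Z.Sublist Y ∧
      Z.length = X.length - d' ∧ Y.length = X.length - d' + i'} with hA
  have hAfin : ∀ d' i', (A d' i').Finite := by
    intro d' i'
    refine Set.Finite.subset (List.finite_length_eq 𝒜 (n - d' + i')) ?_
    rintro Y ⟨-, Z, -, -, -, hYl⟩
    exact hYl
  set B : Finset (List 𝒜) :=
    (Finset.range (d + 1) ×ˢ Finset.range (i + 1)).biUnion
      (fun p => (hAfin p.1 p.2).toFinset) with hB
  have hSB : PostEditSet X d i ⊆ ↑B := by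
    rintro Y ⟨Z, hZX, hZY, hd, hi⟩
    have hZn : Z.length ≤ n := hZX.length_le
    have hZY' : Z.length ≤ Y.length := hZY.length_le
    simp only [hB, Finset.coe_biUnion, Finset.mem_coe, Finset.mem_product,
      Set.mem_iUnion, Finset.mem_range]
    refine ⟨(n - Z.length, Y.length - Z.length), ?_, ?_⟩
    · simp only [Finset.mem_product, Finset.mem_range]
      exact ⟨by omega, by omega⟩
    · rw [Set.Finite.mem_toFinset]
      exact ⟨by omega, Z, hZX, hZY, by omega, by omega⟩
  calc Nat.card (PostEditSet X d i) = (PostEditSet X d i).ncard :=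
        Nat.card_coe_set_eq _
    _ ≤ (↑B : Set (List 𝒜)).ncard := Set.ncard_le_ncard hSB B.finite_toSet
    _ = B.card := Set.ncard_coe_finset _
    _ ≤ ∑ p ∈ Finset.range (d + 1) ×ˢ Finset.range (i + 1),
          ((hAfin p.1 p.2).toFinset).card := Finset.card_biUnion_le
    _ = ∑ d' ∈ Finset.range (d + 1), ∑ i' ∈ Finset.range (i + 1),
          ((hAfin d' i').toFinset).card := by rw [Finset.sum_product]
    _ ≤ _ := ?_
  refine Finset.sum_le_sum fun d' _ => Finset.sum_le_sum fun i' _ => ?_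
  have hcardA : ((hAfin d' i').toFinset).card = Nat.card (A d' i') := by
    rw [Nat.card_coe_set_eq, Set.ncard_eq_toFinset_card _ (hAfin d' i')]
  rw [hcardA]
  by_cases hd' : d' ≤ n
  · have hmain := PostEditAux.aux_card X d' i' hd'
    calc Nat.card (A d' i') ≤
        X.length.choose d' * ((X.length - d' + i').choose i' * Fintype.card 𝒜 ^ i') := hmain
      _ = n.choose d' * (n - d' + i').choose i' * Fintype.card 𝒜 ^ i' := by
        rw [← hn, mul_assoc]
  · have hempty : A d' i' = ∅ := by
      ext Y
      simp only [hA, Set.mem_setOf_eq, Set.mem_empty_iff_false, iff_false, not_and]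
      intro h
      exact absurd h hd'
    rw [hempty]
    simp
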